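/- arXiv:1807.01771 — 2 statements merged into one kernel-verified Lean document; each statement's English description precedes it below -/
import Mathlib

section
/- Under the assumptions above, if additionally the conditional distribution of E[Y|O] given g(O)=x is not a point mass for a set of x of positive probability, and U is strictly concave, then E[U(E[Y|g(O)])] > E[U(E[Y|O])]; i.e., uncertainty via classification has strictly positive bias while direct uncertainty prediction is unbiased. -/
open MeasureTheory ProbabilityTheory

/-- Strictly positive bias of uncertainty via classification: if `U` is strictly
concave and the conditional distribution of `Z = E[Y|O]` given `g(O)` is not a.s.
a point mass (i.e. `Z` is not a.e. equal to `E[Z | g(O)]`), then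
`E[U(E[Y | g(O)])] > E[U(E[Y|O])]`. -/
theorem uvc_strict_bias {Ω β γ : Type*} [m0 : MeasurableSpace Ω]
    [MeasurableSpace β] [MeasurableSpace γ]
    (μ : Measure Ω) [IsProbabilityMeasure μ] {k : ℕ}
    (Y : Ω → (Fin k → ℝ)) (O : Ω → β) (g : β → γ)
    (hO : Measurable O) (hg : Measurable g)
    (hY : Integrable Y μ)
    (hle : MeasurableSpace.comap (g ∘ O) inferInstance ≤ m0)
    (U : (Fin k → ℝ) → ℝ)
    (hU : StrictConcaveOn ℝ Set.univ U)
    -- conditional independence of `Y` and `g(O)` given `O`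
    (hci : μ[Y | MeasurableSpace.comap (g ∘ O) inferInstance]
      =ᵐ[μ] μ[(μ[Y | MeasurableSpace.comap O inferInstance]) |
        MeasurableSpace.comap (g ∘ O) inferInstance])
    -- the conditional law of `E[Y|O]` given `g(O)` is not a point mass
    (hnp : ¬ (μ[Y | MeasurableSpace.comap O inferInstance]
      =ᵐ[μ] μ[(μ[Y | MeasurableSpace.comap O inferInstance]) |
        MeasurableSpace.comap (g ∘ O) inferInstance]))
    (hint : Integrable
      (fun ω => U ((μ[Y | MeasurableSpace.comap O inferInstance]) ω)) μ)
    (hint' : Integrable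
      (fun ω => U ((μ[Y | MeasurableSpace.comap (g ∘ O) inferInstance]) ω)) μ) :
    ∫ ω, U ((μ[Y | MeasurableSpace.comap (g ∘ O) inferInstance]) ω) ∂μ
      > ∫ ω, U ((μ[Y | MeasurableSpace.comap O inferInstance]) ω) ∂μ := by
  classical
  set mO := MeasurableSpace.comap O inferInstance with hmOdef
  set mG := MeasurableSpace.comap (g ∘ O) (inferInstance : MeasurableSpace γ) with hmGdef
  set Z : Ω → (Fin k → ℝ) := μ[Y | mO] with hZdef
  set W : Ω → (Fin k → ℝ) := μ[Z | mG] with hWdef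
  have hmO_le : mO ≤ m0 := hO.comap_le
  -- basic measurability/integrability
  have hZsm : StronglyMeasurable[m0] Z := stronglyMeasurable_condExp.mono hmO_le
  have hZm : Measurable[m0] Z := hZsm.measurable
  have hZint : Integrable Z μ := integrable_condExp
  have hWsmG : StronglyMeasurable[mG] W := stronglyMeasurable_condExp
  have hWm : Measurable[m0] W := (hWsmG.mono hle).measurable
  have hWint : Integrable W μ := integrable_condExp
  set m := MeasurableSpace.comap W (inferInstance : MeasurableSpace (Fin k → ℝ)) with hmdef
  have hmW : m ≤ mG := by
    rw [hmdef]
    exact Measurable.comap_le hWsmG.measurable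
  have hm0 : m ≤ m0 := hmW.trans hle
  have hWsm' : StronglyMeasurable[m] W := by
    refine Measurable.stronglyMeasurable ?_
    exact Measurable.of_comap_le (le_of_eq hmdef.symm)
  have hWcond : μ[W | m] =ᵐ[μ] W := by
    rw [condExp_of_stronglyMeasurable hm0 hWsm' hWint]
  have htower : μ[Z | m] =ᵐ[μ] W :=
    (condExp_condExp_of_le hmW hle).symm.trans hWcond
  -- continuity of U
  have hU_cont : Continuous U := by
    rw [← continuousOn_univ]
    exact hU.concaveOn.continuousOn isOpen_univ
  -- the conditional distribution of Z given W
  set κ := condDistrib Z W μ with hκdef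
  have h1 : μ[Z | m] =ᵐ[μ] fun a => ∫ y, y ∂κ (W a) :=
    condExp_ae_eq_integral_condDistrib' hWm hZint
  have hWκ : ∀ᵐ a ∂μ, W a = ∫ y, y ∂κ (W a) := htower.symm.trans h1
  have h2 : μ[(fun a => U (Z a)) | m] =ᵐ[μ] fun a => ∫ y, U y ∂κ (W a) :=
    condExp_ae_eq_integral_condDistrib hWm hZm.aemeasurable
      hU_cont.stronglyMeasurable hint
  have h3 : ∀ᵐ a ∂μ, Integrable (fun y => y) (κ (W a)) := by
    have hfi : Integrable (fun p : (Fin k → ℝ) × (Fin k → ℝ) => p.2)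
        (@Measure.map Ω _ m0 _ (fun a => (W a, Z a)) μ) := by
      rw [integrable_map_measure continuous_snd.aestronglyMeasurable
        (hWm.aemeasurable.prodMk hZm.aemeasurable)]
      exact hZint
    exact hfi.condDistrib_ae hWm.aemeasurable hZm.aemeasurable
  have h4 : ∀ᵐ a ∂μ, Integrable (fun y => U y) (κ (W a)) := by
    have hfi : Integrable (fun p : (Fin k → ℝ) × (Fin k → ℝ) => U p.2)
        (@Measure.map Ω _ m0 _ (fun a => (W a, Z a)) μ) := by
      have hcs : Continuous fun p : (Fin k → ℝ) × (Fin k → ℝ) => U p.2 :=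
        hU_cont.comp continuous_snd
      rw [integrable_map_measure hcs.aestronglyMeasurable
        (hWm.aemeasurable.prodMk hZm.aemeasurable)]
      exact hint
    exact hfi.condDistrib_ae hWm.aemeasurable hZm.aemeasurable
  -- pointwise (conditional) Jensen with strictness information
  have hpt : ∀ᵐ a ∂μ, (μ[(fun a => U (Z a)) | m]) a ≤ U (W a) ∧
      ((μ[(fun a => U (Z a)) | m]) a = U (W a) →
        ∀ᵐ y ∂κ (W a), y = W a) := by
    filter_upwards [h2, h3, h4, hWκ] with a ha2 ha3 ha4 haW
    haveI : IsProbabilityMeasure (κ (W a)) :=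
      IsMarkovKernel.isProbabilityMeasure _
    have havg : (⨍ y, y ∂κ (W a)) = W a := by
      rw [average_eq_integral]; exact haW.symm
    have := hU.ae_eq_const_or_lt_map_average (f := fun y => y)
      (μ := κ (W a)) (hU.concaveOn.continuousOn isOpen_univ) isClosed_univ
      (Filter.Eventually.of_forall fun _ => Set.mem_univ _) ha3 ha4
    rcases this with hconst | hlt
    · -- Z is a.e. constant equal to W a under κ (W a)
      have hκeq : ∀ᵐ y ∂κ (W a), y = W a := by
        filter_upwards [hconst] with y hy
        simpa [havg] using hy
      have hUeq : (∫ y, U y ∂κ (W a)) = U (W a) := by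
        have : (fun y => U y) =ᵐ[κ (W a)] fun _ => U (W a) := by
          filter_upwards [hκeq] with y hy; rw [hy]
        rw [integral_congr_ae this, integral_const]
        simp
      constructor
      · rw [ha2, hUeq]
      · intro _; exact hκeq
    · rw [average_eq_integral, havg] at hlt
      constructor
      · rw [ha2]; exact hlt.le
      · intro heq
        rw [ha2] at heq
        exact ((not_lt.mpr heq.ge) hlt).elim
  -- integrability of U ∘ W
  have hUW_eq : (fun ω => U ((μ[Y | mG]) ω)) =ᵐ[μ] fun ω => U (W ω) := by
    filter_upwards [hci] with ω hω; rw [hω]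
  have hint_UW : Integrable (fun a => U (W a)) μ := hint'.congr hUW_eq
  have hint_cond : Integrable (μ[(fun a => U (Z a)) | m]) μ := integrable_condExp
  -- the inequality between the integrals
  have hiZ : ∫ a, U (Z a) ∂μ = ∫ a, (μ[(fun a => U (Z a)) | m]) a ∂μ :=
    (integral_condExp (f := fun a => U (Z a)) hm0).symm
  have hle3 : ∫ a, U (Z a) ∂μ ≤ ∫ a, U (W a) ∂μ := by
    rw [hiZ]
    exact integral_mono_ae hint_cond hint_UW (hpt.mono fun a ha => ha.1)
  -- rewrite the goal
  have hgoal_eq : ∫ ω, U ((μ[Y | mG]) ω) ∂μ = ∫ a, U (W a) ∂μ :=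
    integral_congr_ae hUW_eq
  rw [hgoal_eq]
  rcases lt_or_eq_of_le hle3 with hlt | heq
  · exact hlt
  -- equality case: derive a contradiction with hnp
  exfalso
  have heq0 : ∫ a, (U (W a) - (μ[(fun a => U (Z a)) | m]) a) ∂μ = 0 := by
    rw [integral_sub hint_UW hint_cond, ← hiZ, heq]
    ring
  have haeq : (fun a => U (W a) - (μ[(fun a => U (Z a)) | m]) a) =ᵐ[μ] 0 := by
    refine (integral_eq_zero_iff_of_nonneg_ae ?_ (hint_UW.sub hint_cond)).mp heq0
    filter_upwards [hpt] with a ha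
    simpa using sub_nonneg.mpr ha.1
  have hconst_ae : ∀ᵐ a ∂μ, ∀ᵐ y ∂κ (W a), y = W a := by
    filter_upwards [hpt, haeq] with a ha haeq'
    have : (μ[(fun a => U (Z a)) | m]) a = U (W a) := by
      have := haeq'
      simp only [Pi.zero_apply, sub_eq_zero] at this
      exact this.symm
    exact ha.2 this
  -- conclude Z =ᵐ W
  have h5 : μ[(fun a => ‖Z a - W a‖) | m] =ᵐ[μ] fun a => ∫ y, ‖y - W a‖ ∂κ (W a) := by
    have hfcont : Continuous fun p : (Fin k → ℝ) × (Fin k → ℝ) => ‖p.2 - p.1‖ :=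
      (continuous_snd.sub continuous_fst).norm
    exact condExp_prod_ae_eq_integral_condDistrib hWm hZm.aemeasurable
      hfcont.stronglyMeasurable ((hZint.sub hWint).norm)
  have h6 : ∀ᵐ a ∂μ, (∫ y, ‖y - W a‖ ∂κ (W a)) = 0 := by
    filter_upwards [hconst_ae] with a ha
    have : (fun y => ‖y - W a‖) =ᵐ[κ (W a)] fun _ => (0 : ℝ) := by
      filter_upwards [ha] with y hy
      simp [hy]
    rw [integral_congr_ae this, integral_zero]
  have h7 : μ[(fun a => ‖Z a - W a‖) | m] =ᵐ[μ] fun _ => (0 : ℝ) := by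
    filter_upwards [h5, h6] with a ha5 ha6
    rw [ha5, ha6]
  have hZW0 : ∫ a, ‖Z a - W a‖ ∂μ = 0 := by
    rw [← integral_condExp (f := fun a => ‖Z a - W a‖) hm0, integral_congr_ae h7]
    simp
  have hZWae : (fun a => ‖Z a - W a‖) =ᵐ[μ] 0 := by
    refine (integral_eq_zero_iff_of_nonneg_ae ?_ ((hZint.sub hWint).norm)).mp hZW0
    exact Filter.Eventually.of_forall fun a => norm_nonneg _
  have hZWfin : Z =ᵐ[μ] W := by
    filter_upwards [hZWae] with a ha
    have h0 : ‖Z a - W a‖ = 0 := ha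
    exact sub_eq_zero.mp (norm_eq_zero.mp h0)
  exact hnp hZWfin
end

section
/- Let U_var(p) = Σ_l c_l² p_l - (Σ_l c_l p_l)² for fixed real grade values c_1,...,c_k, defined on the probability simplex. Then with Z = E[Y|O], the bias of uncertainty via classification equals U_var(E[Z | g(O)]) - E[U_var(Z) | g(O)] = Var( Σ_l c_l Z_l | g(O) ), and hence the overall bias is E[ Var( Σ_l c_l E[Y_l|O] | g(O) ) ]. -/
open MeasureTheory ProbabilityTheory

lemma my_condexp_lin {Ω : Type*} {m m0 : MeasurableSpace Ω} {μ : Measure Ω}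
    {k : ℕ} (a : Fin k → ℝ) {f : Fin k → Ω → ℝ}
    (hf : ∀ l, Integrable (f l) μ) :
    μ[(fun ω => ∑ l : Fin k, a l * f l ω)|m] =ᵐ[μ]
      fun ω => ∑ l : Fin k, a l * (μ[f l|m]) ω := by
  have h1 : (fun ω => ∑ l : Fin k, a l * f l ω) = ∑ l : Fin k, a l • f l := by
    ext ω; simp [Finset.sum_apply]
  rw [h1]
  refine (condExp_finsetSum (fun l _ => (hf l).smul (a l)) m).trans ?_
  have h2 : ∀ᵐ ω ∂μ, ∀ l : Fin k, (μ[a l • f l|m]) ω = a l * (μ[f l|m]) ω :=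
    ae_all_iff.2 fun l => (condExp_smul (a l) (f l) m).mono fun ω h => by simpa using h
  filter_upwards [h2] with ω h
  simp only [Finset.sum_apply]
  exact Finset.sum_congr rfl fun l _ => h l

lemma my_memℒp_two_condexp {Ω : Type*} {m m0 : MeasurableSpace Ω} (hm : m ≤ m0)
    {μ : Measure Ω} [IsFiniteMeasure μ] {f : Ω → ℝ} (hf : MemLp f 2 μ) :
    MemLp (μ[f|m]) 2 μ := by
  have hfi : Integrable f μ := hf.integrable one_le_two
  have heq : ((condExpL2 ℝ ℝ hm (hf.toLp f) : Lp ℝ 2 μ) : Ω → ℝ) =ᵐ[μ] μ[f|m] := by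
    refine ae_eq_condExp_of_forall_setIntegral_eq hm hfi
      (fun s hs hμs => integrableOn_condExpL2_of_measure_ne_top hm hμs.ne _)
      (fun s hs hμs => ?_) (aestronglyMeasurable_condExpL2 hm _)
    rw [integral_condExpL2_eq hm _ hs hμs.ne]
    exact setIntegral_congr_ae (hm s hs) ((hf.coeFn_toLp).mono fun x hx _ => hx)
  exact (Lp.memLp _).ae_eq heq

lemma my_condexp_coord {Ω : Type*} {m m0 : MeasurableSpace Ω} (hm : m ≤ m0)
    {μ : Measure Ω} [IsFiniteMeasure μ] {k : ℕ} {Z : Ω → Fin k → ℝ}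
    (hZ : Integrable Z μ) (l : Fin k) :
    (fun ω => (μ[Z|m]) ω l) =ᵐ[μ] μ[(fun ω => Z ω l)|m] := by
  set L : (Fin k → ℝ) →L[ℝ] ℝ := ContinuousLinearMap.proj l with hL
  refine ae_eq_condExp_of_forall_setIntegral_eq hm (L.integrable_comp hZ)
    (fun s hs hμs => (L.integrable_comp integrable_condExp).integrableOn)
    (fun s hs hμs => ?_)
    (((continuous_apply l).comp_stronglyMeasurable
      stronglyMeasurable_condExp).aestronglyMeasurable)
  have h1 := L.integral_comp_comm (μ := μ.restrict s) (φ := μ[Z|m]) integrable_condExp.integrableOn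
  have h2 := L.integral_comp_comm (μ := μ.restrict s) (φ := Z) hZ.integrableOn
  simp only [hL, ContinuousLinearMap.proj_apply] at h1 h2
  rw [h1, h2, setIntegral_condExp hm hZ hs]

/-- Bias of uncertainty via classification for
`U_var(p) = ∑ l, c l ^ 2 * p l - (∑ l, c l * p l) ^ 2`: with `Z = E[Y|O]`, a.s.
`U_var(E[Z|g(O)]) - E[U_var(Z)|g(O)] = Var(∑ l, c l * Z_l | g(O))`, and hence the
overall bias equals `E[Var(∑ l, c l * E[Y_l|O] | g(O))]`. -/
theorem uvc_bias_var {Ω β γ : Type*} [m0 : MeasurableSpace Ω]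
    [MeasurableSpace β] [MeasurableSpace γ]
    (μ : Measure Ω) [IsProbabilityMeasure μ] {k : ℕ} (c : Fin k → ℝ)
    (Y : Ω → (Fin k → ℝ)) (O : Ω → β) (g : β → γ)
    (hO : Measurable O) (hg : Measurable g)
    (hY : Integrable Y μ)
    (hle : MeasurableSpace.comap (g ∘ O) inferInstance ≤ m0)
    (hmem : ∀ l : Fin k,
      MemLp (fun ω => (μ[Y | MeasurableSpace.comap O inferInstance]) ω l) 2 μ)
    -- conditional independence of `Y` and `g(O)` given `O`
    (hci : μ[Y | MeasurableSpace.comap (g ∘ O) inferInstance]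
      =ᵐ[μ] μ[(μ[Y | MeasurableSpace.comap O inferInstance]) |
        MeasurableSpace.comap (g ∘ O) inferInstance]) :
    (∀ᵐ ω ∂μ,
      ((∑ l : Fin k, (c l) ^ 2 *
          (μ[(fun ω' => (μ[Y | MeasurableSpace.comap O inferInstance]) ω' l) |
            MeasurableSpace.comap (g ∘ O) inferInstance]) ω)
        - (∑ l : Fin k, c l *
          (μ[(fun ω' => (μ[Y | MeasurableSpace.comap O inferInstance]) ω' l) |
            MeasurableSpace.comap (g ∘ O) inferInstance]) ω) ^ 2)
        - (μ[(fun ω' =>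
            (∑ l : Fin k, (c l) ^ 2 * (μ[Y | MeasurableSpace.comap O inferInstance]) ω' l)
            - (∑ l : Fin k, c l * (μ[Y | MeasurableSpace.comap O inferInstance]) ω' l) ^ 2) |
            MeasurableSpace.comap (g ∘ O) inferInstance]) ω
      = (μ[(fun ω' =>
            (∑ l : Fin k, c l * (μ[Y | MeasurableSpace.comap O inferInstance]) ω' l) ^ 2) |
            MeasurableSpace.comap (g ∘ O) inferInstance]) ω
        - ((μ[(fun ω' =>
            ∑ l : Fin k, c l * (μ[Y | MeasurableSpace.comap O inferInstance]) ω' l) |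
            MeasurableSpace.comap (g ∘ O) inferInstance]) ω) ^ 2)
    ∧
    (∫ ω, ((∑ l : Fin k, (c l) ^ 2 *
            (μ[Y | MeasurableSpace.comap (g ∘ O) inferInstance]) ω l)
          - (∑ l : Fin k, c l *
            (μ[Y | MeasurableSpace.comap (g ∘ O) inferInstance]) ω l) ^ 2) ∂μ
      - ∫ ω, ((∑ l : Fin k, (c l) ^ 2 *
            (μ[Y | MeasurableSpace.comap O inferInstance]) ω l)
          - (∑ l : Fin k, c l *
            (μ[Y | MeasurableSpace.comap O inferInstance]) ω l) ^ 2) ∂μ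
      = ∫ ω, ((μ[(fun ω' =>
            (∑ l : Fin k, c l * (μ[Y | MeasurableSpace.comap O inferInstance]) ω' l) ^ 2) |
            MeasurableSpace.comap (g ∘ O) inferInstance]) ω
        - ((μ[(fun ω' =>
            ∑ l : Fin k, c l * (μ[Y | MeasurableSpace.comap O inferInstance]) ω' l) |
            MeasurableSpace.comap (g ∘ O) inferInstance]) ω) ^ 2) ∂μ) := by
  set mG := MeasurableSpace.comap (g ∘ O) inferInstance with hmGdef
  set mO := MeasurableSpace.comap O inferInstance with hmOdef
  set Z := μ[Y|mO] with hZdef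
  haveI : SigmaFinite (μ.trim hle) := inferInstance
  have hZint : Integrable Z μ := integrable_condExp
  have hZl : ∀ l, Integrable (fun ω => Z ω l) μ := fun l => (hmem l).integrable one_le_two
  -- U_var ingredients
  have hf2 : Integrable (fun ω' => ∑ l : Fin k, (c l) ^ 2 * Z ω' l) μ :=
    integrable_finset_sum _ fun l _ => (hZl l).const_mul _
  have hS2 : MemLp (fun ω' => ∑ l : Fin k, c l * Z ω' l) 2 μ :=
    memLp_finset_sum _ fun l _ => (hmem l).const_mul (c l)
  have hsq : Integrable (fun ω' => (∑ l : Fin k, c l * Z ω' l) ^ 2) μ := hS2.integrable_sq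
  -- linearity facts
  have hA : μ[(fun ω' => ∑ l : Fin k, (c l) ^ 2 * Z ω' l)|mG] =ᵐ[μ]
      fun ω => ∑ l : Fin k, (c l) ^ 2 * (μ[(fun ω' => Z ω' l)|mG]) ω :=
    my_condexp_lin _ hZl
  have hB : μ[(fun ω' => ∑ l : Fin k, c l * Z ω' l)|mG] =ᵐ[μ]
      fun ω => ∑ l : Fin k, c l * (μ[(fun ω' => Z ω' l)|mG]) ω :=
    my_condexp_lin _ hZl
  -- condexp of the difference
  have hC : μ[(fun ω' => (∑ l : Fin k, (c l) ^ 2 * Z ω' l)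
        - (∑ l : Fin k, c l * Z ω' l) ^ 2)|mG]
      =ᵐ[μ] μ[(fun ω' => ∑ l : Fin k, (c l) ^ 2 * Z ω' l)|mG]
        - μ[(fun ω' => (∑ l : Fin k, c l * Z ω' l) ^ 2)|mG] :=
    condExp_sub hf2 hsq mG
  have part1 : ∀ᵐ ω ∂μ,
      ((∑ l : Fin k, (c l) ^ 2 * (μ[(fun ω' => Z ω' l)|mG]) ω)
        - (∑ l : Fin k, c l * (μ[(fun ω' => Z ω' l)|mG]) ω) ^ 2)
        - (μ[(fun ω' => (∑ l : Fin k, (c l) ^ 2 * Z ω' l)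
            - (∑ l : Fin k, c l * Z ω' l) ^ 2)|mG]) ω
      = (μ[(fun ω' => (∑ l : Fin k, c l * Z ω' l) ^ 2)|mG]) ω
        - ((μ[(fun ω' => ∑ l : Fin k, c l * Z ω' l)|mG]) ω) ^ 2 := by
    filter_upwards [hA, hB, hC] with ω hA hB hC
    rw [hC, Pi.sub_apply, ← hA, ← hB]
    ring
  refine ⟨part1, ?_⟩
  -- part 2
  have hWl : ∀ᵐ ω ∂μ, ∀ l : Fin k, (μ[Y|mG]) ω l = (μ[(fun ω' => Z ω' l)|mG]) ω := by
    have h1 : ∀ᵐ ω ∂μ, ∀ l : Fin k, (μ[Y|mG]) ω l = (μ[Z|mG]) ω l :=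
      hci.mono fun ω h => by rw [h]; intro l; rfl
    have h2 : ∀ᵐ ω ∂μ, ∀ l : Fin k, (μ[Z|mG]) ω l = (μ[(fun ω' => Z ω' l)|mG]) ω :=
      ae_all_iff.2 fun l => my_condexp_coord hle hZint l
    filter_upwards [h1, h2] with ω h1 h2 l; rw [h1 l, h2 l]
  have hES2 : MemLp (μ[(fun ω' => ∑ l : Fin k, c l * Z ω' l)|mG]) 2 μ :=
    my_memℒp_two_condexp hle hS2
  have hESsq : Integrable (fun ω => ((μ[(fun ω' => ∑ l : Fin k, c l * Z ω' l)|mG]) ω) ^ 2) μ :=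
    hES2.integrable_sq
  have hI1 : ∫ ω, ((∑ l : Fin k, (c l) ^ 2 * (μ[Y|mG]) ω l)
        - (∑ l : Fin k, c l * (μ[Y|mG]) ω l) ^ 2) ∂μ
      = ∫ ω, ((μ[(fun ω' => ∑ l : Fin k, (c l) ^ 2 * Z ω' l)|mG]) ω
        - ((μ[(fun ω' => ∑ l : Fin k, c l * Z ω' l)|mG]) ω) ^ 2) ∂μ := by
    refine integral_congr_ae ?_
    filter_upwards [hWl, hA, hB] with ω hW hA hB
    rw [hA, hB]
    congr 1
    · exact Finset.sum_congr rfl fun l _ => by rw [hW l]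
    · congr 1; exact Finset.sum_congr rfl fun l _ => by rw [hW l]
  have hI2 : ∫ ω, ((∑ l : Fin k, (c l) ^ 2 * Z ω l)
        - (∑ l : Fin k, c l * Z ω l) ^ 2) ∂μ
      = (∫ ω, (∑ l : Fin k, (c l) ^ 2 * Z ω l) ∂μ)
        - ∫ ω, (∑ l : Fin k, c l * Z ω l) ^ 2 ∂μ :=
    integral_sub hf2 hsq
  have hI3 : ∫ ω, ((μ[(fun ω' => (∑ l : Fin k, c l * Z ω' l) ^ 2)|mG]) ω
        - ((μ[(fun ω' => ∑ l : Fin k, c l * Z ω' l)|mG]) ω) ^ 2) ∂μ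
      = (∫ ω, (μ[(fun ω' => (∑ l : Fin k, c l * Z ω' l) ^ 2)|mG]) ω ∂μ)
        - ∫ ω, ((μ[(fun ω' => ∑ l : Fin k, c l * Z ω' l)|mG]) ω) ^ 2 ∂μ :=
    integral_sub integrable_condExp hESsq
  have hI1' : ∫ ω, ((μ[(fun ω' => ∑ l : Fin k, (c l) ^ 2 * Z ω' l)|mG]) ω
        - ((μ[(fun ω' => ∑ l : Fin k, c l * Z ω' l)|mG]) ω) ^ 2) ∂μ
      = (∫ ω, (μ[(fun ω' => ∑ l : Fin k, (c l) ^ 2 * Z ω' l)|mG]) ω ∂μ)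
        - ∫ ω, ((μ[(fun ω' => ∑ l : Fin k, c l * Z ω' l)|mG]) ω) ^ 2 ∂μ :=
    integral_sub integrable_condExp hESsq
  have e1 : ∫ ω, (μ[(fun ω' => ∑ l : Fin k, (c l) ^ 2 * Z ω' l)|mG]) ω ∂μ
      = ∫ ω, (∑ l : Fin k, (c l) ^ 2 * Z ω l) ∂μ := integral_condExp hle
  have e2 : ∫ ω, (μ[(fun ω' => (∑ l : Fin k, c l * Z ω' l) ^ 2)|mG]) ω ∂μ
      = ∫ ω, (∑ l : Fin k, c l * Z ω l) ^ 2 ∂μ := integral_condExp hle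
  rw [hI1, hI2, hI3, hI1', e1, e2]
  ring
end
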